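/- For N = 4, any ratio vector (u, v, w) satisfies v(1-u) > m_2/n, where n = m_1+m_2+m_3+m_4. -/

import Mathlib

set_option maxHeartbeats 1000000

theorem stmt_15 (m1 m2 m3 m4 : ℝ) (hm1 : 0 < m1) (hm2 : 0 < m2) (hm3 : 0 < m3)
    (hm4 : 0 < m4) (n : ℝ) (hn : n = m1 + m2 + m3 + m4) 
    (r1 r2 r3 r4 : ℝ) (h12 : r1 < r2) (h23 : r2 < r3) (h34 : r3 < r4)
    (x1 x2 x3 : ℝ) (hx1 : x1 ∈ Set.Ioo r1 r2) (hx2 : x2 ∈ Set.Ioo r2 r3)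
    (hx3 : x3 ∈ Set.Ioo r3 r4)
    (hc1 : m1 / (x1 - r1) + m2 / (x1 - r2) + m3 / (x1 - r3) + m4 / (x1 - r4) = 0)
    (hc2 : m1 / (x2 - r1) + m2 / (x2 - r2) + m3 / (x2 - r3) + m4 / (x2 - r4) = 0)
    (hc3 : m1 / (x3 - r1) + m2 / (x3 - r2) + m3 / (x3 - r3) + m4 / (x3 - r4) = 0)
    (σ1 σ2 σ3 : ℝ) (hσ1 : σ1 = (x1 - r1) / (r2 - r1))
    (hσ2 : σ2 = (x2 - r2) / (r3 - r2)) (hσ3 : σ3 = (x3 - r3) / (r4 - r3)) :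
    σ2 * (1 - σ1) > m2 / n := by
  obtain ⟨h1a, h1b⟩ := hx1
  obtain ⟨h2a, h2b⟩ := hx2
  obtain ⟨h3a, h3b⟩ := hx3
  have d11 : x1 - r1 ≠ 0 := sub_ne_zero.mpr (ne_of_gt h1a)
  have d12 : x1 - r2 ≠ 0 := sub_ne_zero.mpr (ne_of_lt h1b)
  have d13 : x1 - r3 ≠ 0 := sub_ne_zero.mpr (ne_of_lt (by linarith))
  have d14 : x1 - r4 ≠ 0 := sub_ne_zero.mpr (ne_of_lt (by linarith))
  have d21 : x2 - r1 ≠ 0 := sub_ne_zero.mpr (ne_of_gt (by linarith))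
  have d22 : x2 - r2 ≠ 0 := sub_ne_zero.mpr (ne_of_gt h2a)
  have d23 : x2 - r3 ≠ 0 := sub_ne_zero.mpr (ne_of_lt h2b)
  have d24 : x2 - r4 ≠ 0 := sub_ne_zero.mpr (ne_of_lt (by linarith))
  have d31 : x3 - r1 ≠ 0 := sub_ne_zero.mpr (ne_of_gt (by linarith))
  have d32 : x3 - r2 ≠ 0 := sub_ne_zero.mpr (ne_of_gt (by linarith))
  have d33 : x3 - r3 ≠ 0 := sub_ne_zero.mpr (ne_of_gt h3a)
  have d34 : x3 - r4 ≠ 0 := sub_ne_zero.mpr (ne_of_lt h3b)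
  have E1 : m1*(x1-r2)*(x1-r3)*(x1-r4) + m2*(x1-r1)*(x1-r3)*(x1-r4)
      + m3*(x1-r1)*(x1-r2)*(x1-r4) + m4*(x1-r1)*(x1-r2)*(x1-r3) = 0 := by
    field_simp at hc1; linarith [hc1]
  have E2 : m1*(x2-r2)*(x2-r3)*(x2-r4) + m2*(x2-r1)*(x2-r3)*(x2-r4)
      + m3*(x2-r1)*(x2-r2)*(x2-r4) + m4*(x2-r1)*(x2-r2)*(x2-r3) = 0 := by
    field_simp at hc2; linarith [hc2]
  have E3 : m1*(x3-r2)*(x3-r3)*(x3-r4) + m2*(x3-r1)*(x3-r3)*(x3-r4)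
      + m3*(x3-r1)*(x3-r2)*(x3-r4) + m4*(x3-r1)*(x3-r2)*(x3-r3) = 0 := by
    field_simp at hc3; linarith [hc3]
  have h12' : x1 - x2 ≠ 0 := sub_ne_zero.mpr (ne_of_lt (by linarith))
  have h13' : x1 - x3 ≠ 0 := sub_ne_zero.mpr (ne_of_lt (by linarith))
  have h23' : x2 - x3 ≠ 0 := sub_ne_zero.mpr (ne_of_lt (by linarith))
  subst hn hσ1 hσ2 hσ3
  have key' : (m2*(r2-r1)*(r3-r2)*(r4-r2) - (m1+m2+m3+m4)*(r2-x1)*(x2-r2)*(x3-r2))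
      * ((x1-x2)*(x1-x3)*(x2-x3)) = 0 := by
    linear_combination ((r2-x2)*(r2-x3)*(x2-x3)) * E1
      - ((r2-x1)*(r2-x3)*(x1-x3)) * E2 + ((r2-x1)*(r2-x2)*(x1-x2)) * E3
  have key : m2*(r2-r1)*(r3-r2)*(r4-r2) = (m1+m2+m3+m4)*(r2-x1)*(x2-r2)*(x3-r2) := by
    have hΔ : (x1-x2)*((x1-x3)*(x2-x3)) ≠ 0 :=
      mul_ne_zero h12' (mul_ne_zero h13' h23')
    have h0 : (m2*(r2-r1)*(r3-r2)*(r4-r2) - (m1+m2+m3+m4)*(r2-x1)*(x2-r2)*(x3-r2)) * ((x1-x2)*((x1-x3)*(x2-x3))) = 0 := by linear_combination key'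
    have := (mul_eq_zero.mp h0).resolve_right hΔ
    linarith
  have hnpos : (0:ℝ) < m1+m2+m3+m4 := by linarith
  have hdenpos : (0:ℝ) < (r3-r2)*(r2-r1) := mul_pos (by linarith) (by linarith)
  have h21 : r2 - r1 ≠ 0 := sub_ne_zero.mpr (ne_of_gt h12)
  have h32 : r3 - r2 ≠ 0 := sub_ne_zero.mpr (ne_of_gt h23)
  have heq : (x2 - r2)/(r3-r2) * (1 - (x1-r1)/(r2-r1)) = (x2-r2)*(r2-x1)/((r3-r2)*(r2-r1)) := by
    field_simp; ring
  rw [heq, gt_iff_lt, div_lt_div_iff₀ hnpos hdenpos]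
  have hcpos : (0:ℝ) < (m1+m2+m3+m4)*(r2-x1)*(x2-r2) :=
    mul_pos (mul_pos hnpos (by linarith)) (by linarith)
  have step : m2*(r2-r1)*(r3-r2)*(r4-r2) < (m1+m2+m3+m4)*(r2-x1)*(x2-r2)*(r4-r2) := by
    rw [key]
    exact mul_lt_mul_of_pos_left (by linarith) hcpos
  have h := lt_of_mul_lt_mul_right step (by linarith : (0:ℝ) ≤ r4-r2)
  calc m2 * ((r3-r2)*(r2-r1)) = m2*(r2-r1)*(r3-r2) := by ring
    _ < (m1+m2+m3+m4)*(r2-x1)*(x2-r2) := h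
    _ = (x2-r2)*(r2-x1)*(m1+m2+m3+m4) := by ring
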